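/- Let μ̂ ∈ ℝ³ be a unit vector, v := (0,0,1), and P := diag(−1, 1, −1). Define R_{μ̂←v} := R_{μ̂,v} if μ̂ᵀv ≥ 0, and R_{μ̂←v} := R_{μ̂,−v}·P otherwise. Then R_{μ̂←v} is well defined (the denominators in the Rodrigues formula are nonzero in each branch), it is a rotation matrix (orthogonal with determinant 1), and it satisfies R_{μ̂←v} v = μ̂. -/

import Mathlib

open Matrix

/-- The matrix `R_{x,y} = 2(x+y)(x+y)ᵀ/((x+y)ᵀ(x+y)) − I`. -/
noncomputable def Rxy (x y : Fin 3 → ℝ) : Matrix (Fin 3) (Fin 3) ℝ :=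
  (2 / ((x + y) ⬝ᵥ (x + y))) • vecMulVec (x + y) (x + y) - 1

lemma vmv_symm (w : Fin 3 → ℝ) : (vecMulVec w w)ᵀ = vecMulVec w w := by
  ext i j; simp [vecMulVec_apply, mul_comm]

lemma vmv_mul (w : Fin 3 → ℝ) :
    vecMulVec w w * vecMulVec w w = (w ⬝ᵥ w) • vecMulVec w w := by
  ext i j
  simp [Matrix.mul_apply, vecMulVec_apply, dotProduct, Fin.sum_univ_three,
    Matrix.smul_apply]
  ring

lemma hh_symm (w : Fin 3 → ℝ) :
    ((2 / (w ⬝ᵥ w)) • vecMulVec w w - (1 : Matrix (Fin 3) (Fin 3) ℝ))ᵀ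
      = (2 / (w ⬝ᵥ w)) • vecMulVec w w - 1 := by
  rw [transpose_sub, transpose_smul, vmv_symm, transpose_one]

lemma hh_orth (w : Fin 3 → ℝ) (hd : w ⬝ᵥ w ≠ 0) :
    ((2 / (w ⬝ᵥ w)) • vecMulVec w w - (1 : Matrix (Fin 3) (Fin 3) ℝ))ᵀ *
      ((2 / (w ⬝ᵥ w)) • vecMulVec w w - 1) = 1 := by
  rw [hh_symm]
  set d := w ⬝ᵥ w with hdd
  set W := vecMulVec w w with hW
  have h1 : ((2 / d) • W - 1) * ((2 / d) • W - 1)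
      = ((2/d) * (2/d) * d) • W - (2/d) • W - (2/d) • W + 1 := by
    rw [sub_mul, mul_sub, mul_sub, smul_mul_assoc, mul_smul_comm, vmv_mul, ← hdd, ← hW]
    simp only [smul_smul, one_mul, mul_one]
    abel_nf
    ring_nf
    abel
  rw [h1]
  have : (2/d) * (2/d) * d = (2/d) + (2/d) := by field_simp; ring
  rw [this, add_smul]
  abel

lemma hh_det (w : Fin 3 → ℝ) (hd : w ⬝ᵥ w ≠ 0) :
    ((2 / (w ⬝ᵥ w)) • vecMulVec w w - (1 : Matrix (Fin 3) (Fin 3) ℝ)).det = 1 := by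
  simp only [dotProduct, Fin.sum_univ_three] at hd ⊢
  rw [Matrix.det_fin_three]
  simp [vecMulVec_apply, Matrix.sub_apply, Matrix.smul_apply, Matrix.one_apply]
  have hd' : w 0 ^ 2 + w 1 ^ 2 + w 2 ^ 2 ≠ 0 := by simpa [sq] using hd
  field_simp
  ring

lemma hh_mulVec (x y : Fin 3 → ℝ) (hx : x ⬝ᵥ x = 1) (hy : y ⬝ᵥ y = 1)
    (hd : (x + y) ⬝ᵥ (x + y) ≠ 0) : (Rxy x y).mulVec y = x := by
  simp only [dotProduct, Fin.sum_univ_three, Pi.add_apply] at hx hy hd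
  have hd' : (x 0 + y 0) ^ 2 + (x 1 + y 1) ^ 2 + (x 2 + y 2) ^ 2 ≠ 0 := by simpa [sq] using hd
  funext i
  fin_cases i <;>
    simp [Rxy, Matrix.mulVec, dotProduct, Fin.sum_univ_three, vecMulVec_apply,
      Matrix.sub_apply, Matrix.smul_apply, Matrix.one_apply, Pi.add_apply] <;>
    field_simp
  · linear_combination (x 0 + y 0) * hy - (x 0 + y 0) * hx
  · linear_combination (x 1 + y 1) * hy - (x 1 + y 1) * hx
  · linear_combination (x 2 + y 2) * hy - (x 2 + y 2) * hx

lemma Rxy_orth (x y : Fin 3 → ℝ) (hd : (x + y) ⬝ᵥ (x + y) ≠ 0) :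
    (Rxy x y)ᵀ * Rxy x y = 1 := hh_orth (x + y) hd

lemma Rxy_det (x y : Fin 3 → ℝ) (hd : (x + y) ⬝ᵥ (x + y) ≠ 0) :
    (Rxy x y).det = 1 := hh_det (x + y) hd

/-- The rotation `R_{μ̂←v}` aligning `v = (0,0,1)` with a unit vector `μ̂` is well
defined (denominators nonzero in each branch), orthogonal with determinant 1,
and satisfies `R_{μ̂←v} v = μ̂`. -/
theorem stmt_8 (μhat : Fin 3 → ℝ) (hμ : μhat ⬝ᵥ μhat = 1) :
    let v : Fin 3 → ℝ := ![0, 0, 1]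
    let P : Matrix (Fin 3) (Fin 3) ℝ := Matrix.diagonal ![-1, 1, -1]
    let R : Matrix (Fin 3) (Fin 3) ℝ :=
      if 0 ≤ μhat ⬝ᵥ v then Rxy μhat v else Rxy μhat (-v) * P
    (0 ≤ μhat ⬝ᵥ v → (μhat + v) ⬝ᵥ (μhat + v) ≠ 0) ∧
    (¬ 0 ≤ μhat ⬝ᵥ v → (μhat + -v) ⬝ᵥ (μhat + -v) ≠ 0) ∧
    Rᵀ * R = 1 ∧ R.det = 1 ∧ R.mulVec v = μhat := by
  intro v P R
  have hμ' : μhat 0 * μhat 0 + μhat 1 * μhat 1 + μhat 2 * μhat 2 = 1 := by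
    simpa [dotProduct, Fin.sum_univ_three] using hμ
  have hμv : μhat ⬝ᵥ v = μhat 2 := by
    simp [dotProduct, Fin.sum_univ_three, v]
  have hv : v ⬝ᵥ v = 1 := by simp [dotProduct, Fin.sum_univ_three, v]
  have hnv : (-v) ⬝ᵥ (-v) = 1 := by simp [dotProduct, Fin.sum_univ_three, v]
  have hdpos : 0 ≤ μhat ⬝ᵥ v → (μhat + v) ⬝ᵥ (μhat + v) ≠ 0 := by
    intro h
    rw [hμv] at h
    have : (μhat + v) ⬝ᵥ (μhat + v) = 2 + 2 * μhat 2 := by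
      simp [dotProduct, Fin.sum_univ_three, v]
      linear_combination hμ'
    rw [this]; positivity
  have hdneg : ¬ 0 ≤ μhat ⬝ᵥ v → (μhat + -v) ⬝ᵥ (μhat + -v) ≠ 0 := by
    intro h
    rw [hμv] at h
    push_neg at h
    have : (μhat + -v) ⬝ᵥ (μhat + -v) = 2 - 2 * μhat 2 := by
      simp [dotProduct, Fin.sum_univ_three, v]
      linear_combination hμ'
    rw [this]; nlinarith
  refine ⟨hdpos, hdneg, ?_, ?_, ?_⟩ <;> by_cases h : 0 ≤ μhat ⬝ᵥ v
  · rw [show R = Rxy μhat v from if_pos h]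
    exact Rxy_orth μhat v (hdpos h)
  · rw [show R = Rxy μhat (-v) * P from if_neg h]
    have hPP : Pᵀ * P = 1 := by
      show (Matrix.diagonal ![-1, 1, -1])ᵀ * Matrix.diagonal ![-1, 1, -1] = 1
      rw [Matrix.diagonal_transpose, Matrix.diagonal_mul_diagonal]
      ext i j
      fin_cases i <;> fin_cases j <;> simp [Matrix.diagonal, Matrix.one_apply]
    rw [Matrix.transpose_mul, Matrix.mul_assoc, ← Matrix.mul_assoc (Rxy μhat (-v))ᵀ,
      Rxy_orth μhat (-v) (hdneg h), Matrix.one_mul, hPP]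
  · rw [show R = Rxy μhat v from if_pos h]
    exact Rxy_det μhat v (hdpos h)
  · rw [show R = Rxy μhat (-v) * P from if_neg h]
    rw [Matrix.det_mul, Rxy_det μhat (-v) (hdneg h), one_mul]
    simp [P, Matrix.det_diagonal, Fin.prod_univ_three]
  · rw [show R = Rxy μhat v from if_pos h]
    exact hh_mulVec μhat v hμ hv (hdpos h)
  · rw [show R = Rxy μhat (-v) * P from if_neg h]
    have hPv : P.mulVec v = -v := by
      funext i; fin_cases i <;>
        simp [P, Matrix.mulVec, dotProduct, Fin.sum_univ_three, Matrix.diagonal, v]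
    rw [← Matrix.mulVec_mulVec, hPv]
    exact hh_mulVec μhat (-v) hμ hnv (hdneg h)
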